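/- Let T > 0, let L : ℝ → (E →ₗ[ℂ] E) be a time-dependent family of operators, and let v : ℝ → E be differentiable on [0,T] with ‖v t‖ = 1, satisfying v'(t) = L t (v t) − Re⟨v t, L t (v t)⟩ • v t. Then for every t ∈ [0,T], the function s ↦ ‖⟨v 0, v s⟩‖² is differentiable at t and |deriv (fun s => ‖⟨v 0, v s⟩‖²) t| ≤ 2·√(‖L t (v t)‖² − |⟨v t, L t (v t)⟩|²)·‖⟨v 0, v t⟩‖·√(1 − ‖⟨v 0, v t⟩‖²). -/

import Mathlib

private lemma conj_mul_self_re (z : ℂ) : ((starRingEnd ℂ) z * z).re = ‖z‖ ^ 2 := by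
  rw [← Complex.normSq_eq_conj_mul_self, Complex.ofReal_re, ← Complex.sq_norm]

private lemma conj_mul_self_re' (z : ℂ) :
    (RCLike.re ((starRingEnd ℂ) z * z) : ℝ) = ‖z‖ ^ 2 := conj_mul_self_re z

private lemma conj_mul_self_eq (z : ℂ) : (starRingEnd ℂ) z * z = (‖z‖ ^ 2 : ℝ) := by
  rw [← Complex.normSq_eq_conj_mul_self]
  norm_cast
  rw [← Complex.sq_norm]

/-- Eq. (B4) of the paper: the rate of change of the overlap `|⟨v 0, v t⟩|²` is bounded by
`2 ΔL Δ𝒫₀ = 2 ΔL |⟨v 0, v t⟩| √(1 − |⟨v 0, v t⟩|²)`. -/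
theorem overlap_rate_bound
    {E : Type*} [NormedAddCommGroup E] [InnerProductSpace ℂ E] [FiniteDimensional ℂ E]
    (T : ℝ) (hT : 0 < T) (L : ℝ → (E →ₗ[ℂ] E)) (v : ℝ → E)
    (hnorm : ∀ t ∈ Set.Icc (0 : ℝ) T, ‖v t‖ = 1)
    (hode : ∀ t ∈ Set.Icc (0 : ℝ) T,
      HasDerivAt v (L t (v t) - (inner ℂ (v t) (L t (v t)) : ℂ).re • v t) t) :
    ∀ t ∈ Set.Icc (0 : ℝ) T,
      DifferentiableAt ℝ (fun s => ‖(inner ℂ (v 0) (v s) : ℂ)‖ ^ 2) t ∧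
      |deriv (fun s => ‖(inner ℂ (v 0) (v s) : ℂ)‖ ^ 2) t| ≤
        2 * Real.sqrt (‖L t (v t)‖ ^ 2 - ‖(inner ℂ (v t) (L t (v t)) : ℂ)‖ ^ 2) *
          ‖(inner ℂ (v 0) (v t) : ℂ)‖ * Real.sqrt (1 - ‖(inner ℂ (v 0) (v t) : ℂ)‖ ^ 2) := by
  intro t ht
  -- notation
  set u : E := v t with hu
  set Lu : E := L t (v t) with hLu
  set b : ℂ := inner ℂ u Lu with hb
  set c : ℂ := inner ℂ (v 0) u with hc
  have hu1 : ‖u‖ = 1 := hnorm t ht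
  have hv0 : ‖v 0‖ = 1 := hnorm 0 ⟨le_refl 0, le_of_lt hT⟩
  have huu : (inner ℂ u u : ℂ) = 1 := by
    rw [inner_self_eq_norm_sq_to_K, hu1]; norm_num
  -- derivative of the inner product curve
  have hva : HasDerivAt v (Lu - (b.re : ℝ) • u) t := hode t ht
  set v' : E := Lu - (b.re : ℝ) • u with hv'
  have hg : HasDerivAt (fun s => (inner ℂ (v 0) (v s) : ℂ)) (inner ℂ (v 0) v' : ℂ) t := by
    have := ((innerSL ℂ (v 0)).restrictScalars ℝ).hasFDerivAt.comp_hasDerivAt t hva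
    simpa [Function.comp_def] using this
  set c' : ℂ := (inner ℂ (v 0) v' : ℂ) with hc'
  have hgc : HasDerivAt (fun s => (starRingEnd ℂ) (inner ℂ (v 0) (v s) : ℂ))
      ((starRingEnd ℂ) c') t := by
    have := (Complex.conjCLE : ℂ ≃L[ℝ] ℂ).toContinuousLinearMap.hasFDerivAt.comp_hasDerivAt t hg
    simpa [Function.comp_def] using this
  have hmul := hgc.mul hg
  have hre := Complex.reCLM.hasFDerivAt.comp_hasDerivAt t hmul
  have hF : HasDerivAt (fun s => ‖(inner ℂ (v 0) (v s) : ℂ)‖ ^ 2)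
      (((starRingEnd ℂ) c' * c + (starRingEnd ℂ) c * c').re) t := by
    have h2 := hre
    simp only [Function.comp_def, Complex.reCLM_apply, Pi.mul_apply] at h2
    rw [show (fun s => ((starRingEnd ℂ) (inner ℂ (v 0) (v s) : ℂ) * (inner ℂ (v 0) (v s) : ℂ)).re)
        = (fun s => ‖(inner ℂ (v 0) (v s) : ℂ)‖ ^ 2) from funext fun s => conj_mul_self_re _] at h2
    exact h2
  refine ⟨hF.differentiableAt, ?_⟩
  rw [hF.deriv]
  -- the derivative equals 2 * re(conj c * c')
  have hDval : ((starRingEnd ℂ) c' * c + (starRingEnd ℂ) c * c').re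
      = 2 * ((starRingEnd ℂ) c * c').re := by
    have h1 : (starRingEnd ℂ) c' * c = (starRingEnd ℂ) ((starRingEnd ℂ) c * c') := by
      simp [mul_comm]
    rw [h1, Complex.add_re, Complex.conj_re]; ring
  rw [hDval]
  -- orthogonal decomposition
  set w : E := v 0 - (starRingEnd ℂ) c • u with hw
  set p : E := Lu - b • u with hp
  have hwu : (inner ℂ w u : ℂ) = 0 := by
    simp [hw, inner_sub_left, inner_smul_left, huu, hc, hu1]
  have hwp : (inner ℂ w Lu : ℂ) = inner ℂ w p := by
    simp [hp, inner_sub_right, inner_smul_right, hwu]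
  have hv0Lu : (inner ℂ (v 0) Lu : ℂ) = c * b + (inner ℂ w p : ℂ) := by
    have h3 : v 0 = (starRingEnd ℂ) c • u + w := by simp [hw]
    rw [h3, inner_add_left, inner_smul_left, ← hb, ← hwp]
    simp
  have hcc' : c' = c * b + (inner ℂ w p : ℂ) - (b.re : ℂ) * c := by
    rw [hc', hv', inner_sub_right, hv0Lu]
    congr 1
    rw [← Complex.coe_smul, inner_smul_right, hc]
  -- compute the real part
  have hkey : ((starRingEnd ℂ) c * c').re = ((starRingEnd ℂ) c * (inner ℂ w p : ℂ)).re := by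
    rw [hcc']
    have h4 : (starRingEnd ℂ) c * (c * b + (inner ℂ w p : ℂ) - (b.re : ℂ) * c)
        = ((‖c‖ ^ 2 : ℝ) : ℂ) * b + (starRingEnd ℂ) c * (inner ℂ w p : ℂ)
          - (b.re : ℂ) * ((‖c‖ ^ 2 : ℝ) : ℂ) := by
      rw [← conj_mul_self_eq]; ring
    rw [h4]
    simp only [Complex.add_re, Complex.sub_re, Complex.mul_re, Complex.ofReal_re,
      Complex.ofReal_im]
    ring
  rw [hkey]
  -- norms of w and p
  have hnw : ‖w‖ ^ 2 = 1 - ‖c‖ ^ 2 := by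
    have h5 := @norm_sub_sq ℂ E _ _ _ (v 0) ((starRingEnd ℂ) c • u)
    rw [← hw] at h5
    rw [h5, hv0, inner_smul_right, ← hc, conj_mul_self_re', norm_smul, hu1, RCLike.norm_conj]
    ring
  have hnp : ‖p‖ ^ 2 = ‖Lu‖ ^ 2 - ‖b‖ ^ 2 := by
    have h6 := @norm_sub_sq ℂ E _ _ _ Lu (b • u)
    rw [← hp] at h6
    have hLub : (inner ℂ Lu u : ℂ) = (starRingEnd ℂ) b := by
      rw [← inner_conj_symm, ← hb]
    rw [h6, inner_smul_right, hLub, mul_comm b ((starRingEnd ℂ) b), conj_mul_self_re', norm_smul, hu1]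
    ring
  have hwn : ‖w‖ = Real.sqrt (1 - ‖c‖ ^ 2) := by
    rw [← hnw, Real.sqrt_sq (norm_nonneg _)]
  have hpn : ‖p‖ = Real.sqrt (‖Lu‖ ^ 2 - ‖b‖ ^ 2) := by
    rw [← hnp, Real.sqrt_sq (norm_nonneg _)]
  -- final estimate
  calc |2 * ((starRingEnd ℂ) c * (inner ℂ w p : ℂ)).re|
      = 2 * |((starRingEnd ℂ) c * (inner ℂ w p : ℂ)).re| := by
        rw [abs_mul]; norm_num
    _ ≤ 2 * ‖(starRingEnd ℂ) c * (inner ℂ w p : ℂ)‖ := by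
        have := Complex.abs_re_le_norm ((starRingEnd ℂ) c * (inner ℂ w p : ℂ))
        linarith
    _ = 2 * (‖c‖ * ‖(inner ℂ w p : ℂ)‖) := by
        rw [norm_mul, RCLike.norm_conj]
    _ ≤ 2 * (‖c‖ * (‖w‖ * ‖p‖)) := by
        have h1 := norm_inner_le_norm (𝕜 := ℂ) w p
        have h2 : (0:ℝ) ≤ ‖c‖ := norm_nonneg _
        nlinarith [norm_nonneg (inner ℂ w p : ℂ)]
    _ = 2 * Real.sqrt (‖Lu‖ ^ 2 - ‖b‖ ^ 2) * ‖c‖ * Real.sqrt (1 - ‖c‖ ^ 2) := by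
        rw [hwn, hpn]; ring
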